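/- arXiv:2008.06308 — 2 statements merged into one kernel-verified Lean document; each statement's English description precedes it below -/
import Mathlib

section
/- Let α ∈ (0,2], let c_n ≥ 0 for n ≥ 1, and let (Y_n)_{n≥1} be independent real random variables such that the characteristic function of Y_n is θ ↦ exp(−c_n |θ|^α) (i.e., Y_n is symmetric α-stable with scale parameter c_n^{1/α}). Then the series Σ_{n=1}^∞ Y_n converges almost surely if and only if Σ_{n=1}^∞ c_n < ∞. -/
open MeasureTheory ProbabilityTheory Filter Topology
open scoped ENNReal NNReal

/-- For `0 ≤ y`, `y - sin y = ∫ t in 0..y, (1 - cos t)`. -/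
private lemma aux_sub_sin_integral (y : ℝ) :
    y - Real.sin y = ∫ t in (0:ℝ)..y, (1 - Real.cos t) := by
  rw [intervalIntegral.integral_sub intervalIntegrable_const
      (Real.continuous_cos.intervalIntegrable 0 y)]
  simp [integral_cos]

private lemma aux_sub_sin {y : ℝ} (hy : |y| ≤ 2) : |y - Real.sin y| ≤ y ^ 2 := by
  have key : ∀ z : ℝ, 0 ≤ z → z ≤ 2 → |z - Real.sin z| ≤ z ^ 2 := by
    intro z hz0 hz2
    have h1 : 0 ≤ z - Real.sin z := sub_nonneg.2 (Real.sin_le hz0)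
    rw [abs_of_nonneg h1, aux_sub_sin_integral]
    have h2 : ∫ t in (0:ℝ)..z, (1 - Real.cos t) ≤ ∫ t in (0:ℝ)..z, t ^ 2 / 2 := by
      apply intervalIntegral.integral_mono_on hz0
      · exact (continuous_const.sub Real.continuous_cos).intervalIntegrable 0 z
      · exact ((continuous_pow 2).div_const 2).intervalIntegrable 0 z
      · intro t _
        have := Real.one_sub_sq_div_two_le_cos (x := t)
        linarith
    have h3 : ∫ t in (0:ℝ)..z, t ^ 2 / 2 = z ^ 3 / 6 := by
      rw [intervalIntegral.integral_div, integral_pow]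
      ring
    rw [h3] at h2
    nlinarith [sq_nonneg z]
  rcases le_or_gt 0 y with hy0 | hy0
  · exact key y hy0 (by rwa [abs_of_nonneg hy0] at hy)
  · have h := key (-y) (by linarith) (by rwa [abs_of_neg hy0] at hy)
    rw [Real.sin_neg] at h
    have e : -(y - Real.sin y) = -y - -Real.sin y := by ring
    calc |y - Real.sin y| = |-(y - Real.sin y)| := (abs_neg _).symm
      _ = |-y - -Real.sin y| := by rw [e]
      _ ≤ (-y) ^ 2 := h
      _ = y ^ 2 := by ring

private lemma aux_sq_le_cos {y : ℝ} (hy : |y| ≤ 2) : y ^ 2 ≤ 5 * (1 - Real.cos y) := by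
  have hpi : |y| ≤ Real.pi := hy.trans (by linarith [Real.pi_gt_three])
  have h := Real.cos_le_one_sub_mul_cos_sq hpi
  have hpi2 : Real.pi ^ 2 ≤ 10 := by nlinarith [Real.pi_lt_d2, Real.pi_pos]
  have hppos : (0:ℝ) < Real.pi ^ 2 := by positivity
  have h2 : 2 / Real.pi ^ 2 * y ^ 2 ≤ 1 - Real.cos y := by linarith
  have h4 : 2 * y ^ 2 = 2 / Real.pi ^ 2 * y ^ 2 * Real.pi ^ 2 := by field_simp
  have h5 : 2 * y ^ 2 ≤ (1 - Real.cos y) * Real.pi ^ 2 := by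
    rw [h4]; exact mul_le_mul_of_nonneg_right h2 hppos.le
  nlinarith [Real.cos_le_one y, sq_nonneg y]


private lemma aux_inner (y : ℝ) (hy : y ≠ 0) :
    ∫ t in Set.Ioc (0:ℝ) 1, (1 - Real.cos (t * y)) = 1 - Real.sin y / y := by
  have hci : IntervalIntegrable (fun t : ℝ => Real.cos (t * y)) MeasureTheory.volume 0 1 :=
    (by fun_prop : Continuous fun t : ℝ => Real.cos (t * y)).intervalIntegrable 0 1
  rw [← intervalIntegral.integral_of_le zero_le_one,
    intervalIntegral.integral_sub intervalIntegrable_const hci,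
    intervalIntegral.integral_comp_mul_right Real.cos hy, integral_cos]
  simp [Real.sin_zero, smul_eq_mul]
  field_simp

private lemma aux_tail_nonneg (y : ℝ) :
    0 ≤ ∫ t in Set.Ioc (0:ℝ) 1, (1 - Real.cos (t * y)) :=
  setIntegral_nonneg measurableSet_Ioc (fun t _ => by linarith [Real.cos_le_one (t * y)])

private lemma aux_tail {y : ℝ} (hy : 2 ≤ |y|) :
    1/2 ≤ ∫ t in Set.Ioc (0:ℝ) 1, (1 - Real.cos (t * y)) := by
  have hy0 : y ≠ 0 := by
    intro h
    rw [h, abs_zero] at hy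
    linarith
  rw [aux_inner y hy0]
  have h2 : (0:ℝ) < |y| := by linarith
  have h1 : |Real.sin y / y| ≤ 1/2 := by
    rw [abs_div, div_le_iff₀ h2]
    have := Real.abs_sin_le_one y
    linarith
  have := (abs_le.1 h1).2
  linarith

set_option maxHeartbeats 1000000 in
theorem stmt_1 {Ω : Type*} [MeasurableSpace Ω] (P : Measure Ω) [IsProbabilityMeasure P]
    (α : ℝ) (hα : 0 < α) (hα2 : α ≤ 2)
    (c : ℕ → ℝ) (hc : ∀ n, 0 ≤ c n)
    (Y : ℕ → Ω → ℝ) (hYmeas : ∀ n, Measurable (Y n))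
    (hindep : iIndepFun Y P)
    (hchar : ∀ n, ∀ θ : ℝ,
      ∫ ω, Complex.exp (θ * Y n ω * Complex.I) ∂P =
        Complex.exp (-(c n * |θ| ^ α) : ℝ)) :
    (∀ᵐ ω ∂P, ∃ L : ℝ,
        Tendsto (fun N => ∑ n ∈ Finset.range N, Y n ω) atTop (𝓝 L)) ↔
      Summable c := by
  -- integrability of bounded measurable functions
  have hint : ∀ (g : Ω → ℝ), Measurable g → ∀ C : ℝ, (∀ ω, |g ω| ≤ C) → Integrable g P := by
    intro g hg C hC
    exact (integrable_const C).mono' hg.aestronglyMeasurable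
      (Eventually.of_forall (by simpa [Real.norm_eq_abs] using hC))
  have hintcos : ∀ (g : Ω → ℝ), Measurable g → ∀ t : ℝ,
      Integrable (fun ω => Real.cos (t * g ω)) P :=
    fun g hg t => hint _ (Real.measurable_cos.comp (measurable_const.mul hg)) 1
      (fun ω => Real.abs_cos_le_one _)
  have hintsin : ∀ (g : Ω → ℝ), Measurable g → ∀ t : ℝ,
      Integrable (fun ω => Real.sin (t * g ω)) P :=
    fun g hg t => hint _ (Real.measurable_sin.comp (measurable_const.mul hg)) 1
      (fun ω => Real.abs_sin_le_one _)
  -- cosine and sine moments from the characteristic function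
  have key : ∀ n (θ : ℝ), (∫ ω, Real.cos (θ * Y n ω) ∂P = Real.exp (-(c n * |θ| ^ α)))
      ∧ (∫ ω, Real.sin (θ * Y n ω) ∂P = 0) := by
    intro n θ
    have h := hchar n θ
    have h1 : ∀ ω, Complex.exp (θ * Y n ω * Complex.I) =
        (Real.cos (θ * Y n ω) : ℂ) + (Real.sin (θ * Y n ω) : ℂ) * Complex.I := by
      intro ω
      rw [show ((θ : ℂ) * (Y n ω : ℂ)) = ((θ * Y n ω : ℝ) : ℂ) by push_cast; ring,
        Complex.exp_mul_I, ← Complex.ofReal_cos, ← Complex.ofReal_sin]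
    have i1 : Integrable (fun ω => (Real.cos (θ * Y n ω) : ℂ)) P :=
      (hintcos _ (hYmeas n) θ).ofReal
    have i2 : Integrable (fun ω => (Real.sin (θ * Y n ω) : ℂ) * Complex.I) P :=
      ((hintsin _ (hYmeas n) θ).ofReal).mul_const _
    have e3 : ∫ ω, (Real.cos (θ * Y n ω) : ℂ) ∂P
        = ((∫ ω, Real.cos (θ * Y n ω) ∂P : ℝ) : ℂ) := integral_ofReal
    have e4 : ∫ ω, (Real.sin (θ * Y n ω) : ℂ) ∂P
        = ((∫ ω, Real.sin (θ * Y n ω) ∂P : ℝ) : ℂ) := integral_ofReal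
    rw [integral_congr_ae (Eventually.of_forall h1), integral_add i1 i2,
      integral_mul_const, e3, e4, ← Complex.ofReal_exp] at h
    rw [Complex.ext_iff] at h
    simpa [-Complex.ofReal_exp] using h
  have hcos : ∀ n (θ : ℝ), ∫ ω, Real.cos (θ * Y n ω) ∂P = Real.exp (-(c n * |θ| ^ α)) :=
    fun n θ => (key n θ).1
  have hsin : ∀ n (θ : ℝ), ∫ ω, Real.sin (θ * Y n ω) ∂P = 0 := fun n θ => (key n θ).2
  constructor
  · -- a.s. convergence implies summability
    intro hconv
    by_contra hns
    have hC : Tendsto (fun N => ∑ n ∈ Finset.range N, c n) atTop atTop :=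
      (not_summable_iff_tendsto_nat_atTop_of_nonneg hc).1 hns
    set s : ℕ → Ω → ℝ := fun N ω => ∑ n ∈ Finset.range N, Y n ω with hs
    have hsmeas : ∀ N, Measurable (s N) := fun N => Finset.measurable_sum _ (fun i _ => hYmeas i)
    have hSchar : ∀ t : ℝ, 0 ≤ t → ∀ N,
        (∫ ω, Real.cos (t * s N ω) ∂P = Real.exp (-((∑ n ∈ Finset.range N, c n) * t ^ α)))
        ∧ (∫ ω, Real.sin (t * s N ω) ∂P = 0) := by
      intro t ht N
      induction N with
      | zero => simp [hs]
      | succ N ih =>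
        have hi0 : IndepFun (s N) (Y N) P := by
          have h' := hindep.indepFun_finset_sum_of_notMem hYmeas
            (Finset.notMem_range_self (n := N))
          have e : (∑ j ∈ Finset.range N, Y j) = s N := by
            funext ω; simp [hs]
          rwa [e] at h' 
        have hsplit : ∀ ω, t * s (N+1) ω = t * s N ω + t * Y N ω := by
          intro ω
          simp only [hs, Finset.sum_range_succ]
          ring
        have hYc := hcos N t
        have hYs := hsin N t
        rw [abs_of_nonneg ht] at hYc
        have hprod : ∀ (f g : ℝ → ℝ), Measurable f → Measurable g →
            (∀ x, |f x| ≤ 1) → (∀ x, |g x| ≤ 1) →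
            ∫ ω, f (s N ω) * g (Y N ω) ∂P =
              (∫ ω, f (s N ω) ∂P) * ∫ ω, g (Y N ω) ∂P := by
          intro f g hf hg hfb hgb
          have := (hi0.comp hf hg).integral_mul_eq_mul_integral
            (hint _ (hf.comp (hsmeas N)) 1 (fun ω => hfb _)).1
            (hint _ (hg.comp (hYmeas N)) 1 (fun ω => hgb _)).1
          simpa [Function.comp] using this
        have mcos : Measurable fun x : ℝ => Real.cos (t * x) := by fun_prop
        have msin : Measurable fun x : ℝ => Real.sin (t * x) := by fun_prop
        have bcos : ∀ x : ℝ, |Real.cos (t * x)| ≤ 1 := fun x => Real.abs_cos_le_one _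
        have bsin : ∀ x : ℝ, |Real.sin (t * x)| ≤ 1 := fun x => Real.abs_sin_le_one _
        have ecc := hprod (fun x => Real.cos (t * x)) (fun x => Real.cos (t * x))
          mcos mcos bcos bcos
        have ess := hprod (fun x => Real.sin (t * x)) (fun x => Real.sin (t * x))
          msin msin bsin bsin
        have esc := hprod (fun x => Real.sin (t * x)) (fun x => Real.cos (t * x))
          msin mcos bsin bcos
        have ecs := hprod (fun x => Real.cos (t * x)) (fun x => Real.sin (t * x))
          mcos msin bcos bsin
        have icc : Integrable (fun ω => Real.cos (t * s N ω) * Real.cos (t * Y N ω)) P :=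
          hint _ (by fun_prop) 1 (fun ω => by
            rw [abs_mul]
            exact mul_le_one₀ (Real.abs_cos_le_one _) (abs_nonneg _) (Real.abs_cos_le_one _))
        have iss : Integrable (fun ω => Real.sin (t * s N ω) * Real.sin (t * Y N ω)) P :=
          hint _ (by fun_prop) 1 (fun ω => by
            rw [abs_mul]
            exact mul_le_one₀ (Real.abs_sin_le_one _) (abs_nonneg _) (Real.abs_sin_le_one _))
        have isc : Integrable (fun ω => Real.sin (t * s N ω) * Real.cos (t * Y N ω)) P :=
          hint _ (by fun_prop) 1 (fun ω => by
            rw [abs_mul]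
            exact mul_le_one₀ (Real.abs_sin_le_one _) (abs_nonneg _) (Real.abs_cos_le_one _))
        have ics : Integrable (fun ω => Real.cos (t * s N ω) * Real.sin (t * Y N ω)) P :=
          hint _ (by fun_prop) 1 (fun ω => by
            rw [abs_mul]
            exact mul_le_one₀ (Real.abs_cos_le_one _) (abs_nonneg _) (Real.abs_sin_le_one _))
        constructor
        · have e1 : ∀ ω, Real.cos (t * s (N+1) ω) =
              Real.cos (t * s N ω) * Real.cos (t * Y N ω)
                - Real.sin (t * s N ω) * Real.sin (t * Y N ω) := by
            intro ω; rw [hsplit ω, Real.cos_add]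
          rw [integral_congr_ae (Eventually.of_forall e1), integral_sub icc iss, ecc, ess,
            ih.1, ih.2, hYc, hYs, Finset.sum_range_succ]
          rw [← Real.exp_add]
          ring_nf
        · have e1 : ∀ ω, Real.sin (t * s (N+1) ω) =
              Real.sin (t * s N ω) * Real.cos (t * Y N ω)
                + Real.cos (t * s N ω) * Real.sin (t * Y N ω) := by
            intro ω; rw [hsplit ω, Real.sin_add]
          rw [integral_congr_ae (Eventually.of_forall e1), integral_add isc ics, esc, ecs,
            ih.2, hYs]
          ring
    -- limit function
    classical
    set g : Ω → ℝ := fun ω =>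
      if h : ∃ L, Tendsto (fun N => s N ω) atTop (𝓝 L) then h.choose else 0 with hgdef
    have hgtend : ∀ᵐ ω ∂P, Tendsto (fun N => s N ω) atTop (𝓝 (g ω)) := by
      filter_upwards [hconv] with ω hω
      have hω' : ∃ L, Tendsto (fun N => s N ω) atTop (𝓝 L) := hω
      have hgω : g ω = hω'.choose := by
        simp only [hgdef]
        rw [dif_pos hω']
      rw [hgω]
      exact hω'.choose_spec
    have hzero : ∀ t : ℝ, 0 < t → ∫ ω, Real.cos (t * g ω) ∂P = 0 := by
      intro t ht
      have h1 : Tendsto (fun N => ∫ ω, Real.cos (t * s N ω) ∂P) atTop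
          (𝓝 (∫ ω, Real.cos (t * g ω) ∂P)) := by
        apply tendsto_integral_of_dominated_convergence (fun _ => 1)
          (fun N => (hintcos _ (hsmeas N) t).1) (integrable_const 1)
          (fun N => Eventually.of_forall fun ω => by
            simpa [Real.norm_eq_abs] using Real.abs_cos_le_one (t * s N ω))
        filter_upwards [hgtend] with ω hω
        exact (Real.continuous_cos.tendsto _).comp (hω.const_mul t)
      have h2 : Tendsto (fun N => ∫ ω, Real.cos (t * s N ω) ∂P) atTop (𝓝 0) := by
        have heq : (fun N => ∫ ω, Real.cos (t * s N ω) ∂P)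
            = fun N => Real.exp (-((∑ n ∈ Finset.range N, c n) * t ^ α)) := by
          funext N; exact (hSchar t ht.le N).1
        rw [heq]
        exact Real.tendsto_exp_neg_atTop_nhds_zero.comp
          (hC.atTop_mul_const (Real.rpow_pos_of_pos ht α))
      exact tendsto_nhds_unique h1 h2
    have h3 : Tendsto (fun k : ℕ => ∫ ω, Real.cos ((1/(k+1) : ℝ) * g ω) ∂P) atTop
        (𝓝 (∫ _ω, (1:ℝ) ∂P)) := by
      have hgmeas : AEMeasurable g P :=
        aemeasurable_of_tendsto_metrizable_ae atTop (fun N => (hsmeas N).aemeasurable) hgtend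
      apply tendsto_integral_of_dominated_convergence (fun _ => 1)
        (fun k => (Real.measurable_cos.comp_aemeasurable
          (hgmeas.const_mul _)).aestronglyMeasurable)
        (integrable_const 1)
        (fun k => Eventually.of_forall fun ω => by
          simpa [Real.norm_eq_abs] using Real.abs_cos_le_one _)
      refine Eventually.of_forall fun ω => ?_
      have : Tendsto (fun k : ℕ => (1/(k+1) : ℝ) * g ω) atTop (𝓝 0) := by
        simpa using tendsto_one_div_add_atTop_nhds_zero_nat.mul_const (g ω)
      simpa [Function.comp_def] using (Real.continuous_cos.tendsto 0).comp this
    have h4 : (fun k : ℕ => ∫ ω, Real.cos ((1/(k+1) : ℝ) * g ω) ∂P) = fun _ => (0:ℝ) := by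
      funext k
      exact hzero _ (by positivity)
    rw [h4] at h3
    have h5 : (0:ℝ) = ∫ _ω, (1:ℝ) ∂P := tendsto_nhds_unique tendsto_const_nhds h3
    simp at h5
  · -- summability implies a.s. convergence
    intro hsum
    classical
    have hV0 : (0:ℝ) ≤ 2 * ∑' k, c k := by linarith [(tsum_nonneg hc : (0:ℝ) ≤ ∑' k, c k)]
    set V : ℝ := 2 * ∑' k, c k with hVdef
    set X : ℕ → Ω → ℝ := fun n ω => Real.sin (Y n ω) with hX
    have hXmeas : ∀ n, Measurable (X n) := fun n => Real.measurable_sin.comp (hYmeas n)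
    have hXsm : ∀ n, StronglyMeasurable (X n) := fun n => (hXmeas n).stronglyMeasurable
    have hXbd : ∀ n ω, |X n ω| ≤ 1 := fun n ω => Real.abs_sin_le_one _
    have hXint : ∀ n, Integrable (X n) P := fun n => hint _ (hXmeas n) 1 (hXbd n)
    have hXmean : ∀ n, ∫ ω, X n ω ∂P = 0 := by
      intro n
      have h := hsin n 1
      simpa [hX, one_mul] using h
    have hXsq : ∀ n, ∫ ω, (X n ω) ^ 2 ∂P ≤ 2 * c n := by
      intro n
      have h2 : ∀ ω, (X n ω) ^ 2 = 1/2 - Real.cos (2 * Y n ω) / 2 := by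
        intro ω
        have a := Real.cos_two_mul (Y n ω)
        have b := Real.sin_sq_add_cos_sq (Y n ω)
        simp only [hX]
        linarith
      rw [integral_congr_ae (Eventually.of_forall h2),
        integral_sub (integrable_const _) ((hintcos _ (hYmeas n) 2).div_const 2)]
      have hcc : ∫ ω, Real.cos (2 * Y n ω) / 2 ∂P = Real.exp (-(c n * |(2:ℝ)| ^ α)) / 2 := by
        rw [integral_div, hcos n 2]
      rw [hcc, integral_const]
      simp only [probReal_univ, ENNReal.toReal_one, one_smul, smul_eq_mul, one_mul]
      have e1 : |(2:ℝ)| ^ α ≤ 4 := by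
        rw [abs_of_nonneg (by norm_num : (0:ℝ) ≤ 2)]
        calc (2:ℝ) ^ α ≤ (2:ℝ) ^ (2:ℝ) := Real.rpow_le_rpow_of_exponent_le one_le_two hα2
          _ = 4 := by
            rw [show ((2:ℝ):ℝ) = ((2:ℕ):ℝ) by norm_num, Real.rpow_natCast]
            norm_num
      have e2 : 0 ≤ |(2:ℝ)| ^ α := Real.rpow_nonneg (abs_nonneg _) _
      have e3 := Real.add_one_le_exp (-(c n * |(2:ℝ)| ^ α))
      generalize |(2:ℝ)| ^ α = z at e1 e2 e3 ⊢
      nlinarith [mul_nonneg (hc n) e2, mul_le_mul_of_nonneg_left e1 (hc n)]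
    have hXindep : iIndepFun X P :=
      hindep.comp (fun _ => Real.sin) (fun _ => Real.measurable_sin)
    set ℱ : Filtration ℕ _ := Filtration.natural X hXsm with hFdef
    set f : ℕ → Ω → ℝ := fun n ω => ∑ i ∈ Finset.range (n + 1), X i ω with hf
    have hfmeas : ∀ n, Measurable (f n) := fun n => Finset.measurable_sum _ (fun i _ => hXmeas i)
    have hadp : StronglyAdapted ℱ f := by
      intro n
      apply Finset.stronglyMeasurable_fun_sum
      intro i hi
      have hin : i ≤ n := Nat.lt_succ_iff.mp (Finset.mem_range.mp hi)
      exact (Filtration.stronglyAdapted_natural hXsm i).mono (ℱ.mono hin)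
    have hfint : ∀ n, Integrable (f n) P := fun n => integrable_finset_sum _ (fun i _ => hXint i)
    have hmart : Martingale f ℱ P := by
      refine martingale_nat hadp hfint (fun n => ?_)
      have hsplit : f (n + 1) = f n + X (n + 1) := by
        funext ω
        simp [hf, Finset.sum_range_succ]
      have h1 : P[f (n+1)|ℱ n] =ᵐ[P] P[f n|ℱ n] + P[X (n+1)|ℱ n] := by
        rw [hsplit]
        exact condExp_add (hfint n) (hXint (n+1)) _
      have h2 : P[f n|ℱ n] = f n := condExp_of_stronglyMeasurable (ℱ.le n) (hadp n) (hfint n)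
      have hco : Indep (MeasurableSpace.comap (X (n+1)) inferInstance) (ℱ n) P := by
        have hii : iIndep (fun i => MeasurableSpace.comap (X i) inferInstance) P := hXindep
        have h4 := indep_biSup_compl (fun i => (hXmeas i).comap_le) hii {n+1}
        have h5 : MeasurableSpace.comap (X (n+1)) inferInstance
            ≤ ⨆ i ∈ ({n+1} : Set ℕ), MeasurableSpace.comap (X i) inferInstance := by
          simp
        have h6 : (ℱ n : MeasurableSpace Ω)
            ≤ ⨆ i ∈ (({n+1} : Set ℕ))ᶜ, MeasurableSpace.comap (X i) inferInstance := by
          have e : (ℱ n : MeasurableSpace Ω)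
              = ⨆ j, ⨆ _ : j ≤ n, MeasurableSpace.comap (X j) inferInstance := rfl
          rw [e]
          refine iSup₂_le fun j hj => ?_
          have hjm : j ∈ (({n+1} : Set ℕ))ᶜ := by
            simp only [Set.mem_compl_iff, Set.mem_singleton_iff]
            omega
          exact le_iSup₂_of_le j hjm le_rfl
        exact indep_of_indep_of_le_right (indep_of_indep_of_le_left h4 h5) h6
      have hXcm : StronglyMeasurable[MeasurableSpace.comap (X (n+1)) inferInstance] (X (n+1)) := by
        apply Measurable.stronglyMeasurable
        exact Measurable.of_comap_le le_rfl
      have h3 : P[X (n+1)|ℱ n] =ᵐ[P] fun _ => ∫ ω, X (n+1) ω ∂P :=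
        condExp_indep_eq ((hXmeas (n+1)).comap_le) (ℱ.le n) hXcm hco
      filter_upwards [h1, h3] with ω e1 e3
      rw [e1, Pi.add_apply, h2, e3, hXmean (n+1), add_zero]
    have hintij : ∀ i j : ℕ, Integrable (fun ω => X i ω * X j ω) P := fun i j =>
      hint _ ((hXmeas i).mul (hXmeas j)) 1 (fun ω => by
        rw [abs_mul]
        exact mul_le_one₀ (hXbd i ω) (abs_nonneg _) (hXbd j ω))
    have hfsq : ∀ n, ∫ ω, (f n ω) ^ 2 ∂P ≤ V := by
      intro n
      have hexp : ∀ ω, (f n ω) ^ 2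
          = ∑ i ∈ Finset.range (n+1), ∑ j ∈ Finset.range (n+1), X i ω * X j ω := by
        intro ω
        rw [sq, hf]
        simp only
        rw [Finset.sum_mul_sum]
      rw [integral_congr_ae (Eventually.of_forall hexp),
        integral_finset_sum _ (fun i _ => integrable_finset_sum _ (fun j _ => hintij i j))]
      have hswap : ∀ i ∈ Finset.range (n+1),
          ∫ ω, ∑ j ∈ Finset.range (n+1), X i ω * X j ω ∂P
            = ∑ j ∈ Finset.range (n+1), ∫ ω, X i ω * X j ω ∂P :=
        fun i _ => integral_finset_sum _ (fun j _ => hintij i j)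
      rw [Finset.sum_congr rfl hswap]
      have hoff : ∀ i j : ℕ, i ≠ j → ∫ ω, X i ω * X j ω ∂P = 0 := by
        intro i j hij
        have hIJ : IndepFun (X i) (X j) P :=
          (hindep.indepFun hij).comp Real.measurable_sin Real.measurable_sin
        have h0 : ∫ ω, X i ω * X j ω ∂P = (∫ ω, X i ω ∂P) * ∫ ω, X j ω ∂P :=
          hIJ.integral_fun_mul_eq_mul_integral (hXint i).1 (hXint j).1
        rw [h0, hXmean i, zero_mul]
      have hdiag : ∑ i ∈ Finset.range (n+1), ∑ j ∈ Finset.range (n+1), ∫ ω, X i ω * X j ω ∂P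
          ≤ ∑ i ∈ Finset.range (n+1), 2 * c i := by
        apply Finset.sum_le_sum
        intro i hi
        rw [Finset.sum_eq_single i (fun j _ hj => hoff i j (Ne.symm hj)) (fun h => absurd hi h)]
        calc ∫ ω, X i ω * X i ω ∂P = ∫ ω, (X i ω)^2 ∂P := by
              congr 1
              funext ω
              ring
          _ ≤ 2 * c i := hXsq i
      refine hdiag.trans ?_
      rw [hVdef]
      have h9 := Summable.sum_le_tsum (Finset.range (n+1)) (fun i _ => hc i) hsum
      rw [← Finset.mul_sum]
      linarith
    have hbdd : ∀ n, eLpNorm (f n) 1 P ≤ ((Real.sqrt V).toNNReal : ℝ≥0∞) := by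
      intro n
      refine (eLpNorm_le_eLpNorm_of_exponent_le one_le_two (hfint n).aestronglyMeasurable).trans ?_
      have hfb : ∀ ω, |f n ω| ≤ (n+1 : ℝ) := by
        intro ω
        calc |f n ω| ≤ ∑ i ∈ Finset.range (n+1), |X i ω| := Finset.abs_sum_le_sum_abs _ _
          _ ≤ ∑ i ∈ Finset.range (n+1), 1 := Finset.sum_le_sum (fun i _ => hXbd i ω)
          _ = (n+1 : ℝ) := by simp
      have hsq_int : Integrable (fun ω => (f n ω)^2) P := by
        apply hint _ ((hfmeas n).pow_const 2) ((n+1:ℝ)^2)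
        intro ω
        rw [abs_pow]
        exact pow_le_pow_left₀ (abs_nonneg _) (hfb ω) 2
      have e1 : ∫⁻ ω, ‖f n ω‖ₑ ^ (2:ℝ) ∂P = ENNReal.ofReal (∫ ω, (f n ω)^2 ∂P) := by
        rw [ofReal_integral_eq_lintegral_ofReal hsq_int
          (Eventually.of_forall fun ω => sq_nonneg _)]
        apply lintegral_congr
        intro ω
        have e2 : f n ω ^ 2 = ‖f n ω‖ ^ (2:ℝ) := by
          rw [show ((2:ℝ)) = ((2:ℕ):ℝ) by norm_num, Real.rpow_natCast, Real.norm_eq_abs, sq_abs]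
        rw [← ofReal_norm, e2,
          ENNReal.ofReal_rpow_of_nonneg (norm_nonneg _) (by norm_num)]
      rw [eLpNorm_eq_lintegral_rpow_enorm_toReal two_ne_zero ENNReal.ofNat_ne_top]
      simp only [ENNReal.toReal_ofNat]
      rw [e1]
      calc (ENNReal.ofReal (∫ ω, (f n ω)^2 ∂P)) ^ (1/(2:ℝ))
          ≤ (ENNReal.ofReal V) ^ (1/(2:ℝ)) :=
            ENNReal.rpow_le_rpow (ENNReal.ofReal_le_ofReal (hfsq n)) (by norm_num)
        _ = ENNReal.ofReal (V ^ (1/(2:ℝ))) :=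
            ENNReal.ofReal_rpow_of_nonneg hV0 (by norm_num)
        _ = ((Real.sqrt V).toNNReal : ℝ≥0∞) := by
            rw [← Real.sqrt_eq_rpow]
            rfl
    have hconvX : ∀ᵐ ω ∂P, ∃ l, Tendsto (fun n => f n ω) atTop (𝓝 l) :=
      hmart.submartingale.exists_ae_tendsto_of_bdd hbdd
    -- tail bound via Fubini
    have htail : ∀ n, P {ω | 2 ≤ |Y n ω|} ≤ ENNReal.ofReal (2 * c n) := by
      intro n
      set ν := volume.restrict (Set.Ioc (0:ℝ) 1) with hν
      haveI : IsFiniteMeasure ν := by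
        constructor
        rw [hν, Measure.restrict_apply_univ]
        simp [Real.volume_Ioc]
      have hFmeas : Measurable (fun p : ℝ × Ω => 1 - Real.cos (p.1 * Y n p.2)) :=
        measurable_const.sub
          (Real.measurable_cos.comp (measurable_fst.mul ((hYmeas n).comp measurable_snd)))
      have hFint : Integrable (Function.uncurry fun t ω => 1 - Real.cos (t * Y n ω)) (ν.prod P) := by
        refine (integrable_const 2).mono' hFmeas.aestronglyMeasurable
          (Eventually.of_forall fun p => ?_)
        obtain ⟨t, ω⟩ := p
        simp only [Function.uncurry_apply_pair]
        rw [Real.norm_eq_abs, abs_le]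
        constructor
        · linarith [Real.cos_le_one (t * Y n ω)]
        · linarith [Real.neg_one_le_cos (t * Y n ω)]
      have hswap := integral_integral_swap hFint
      have hint1 : Integrable (fun t => ∫ ω, (1 - Real.cos (t * Y n ω)) ∂P) ν :=
        hFint.integral_prod_left
      have hGint : Integrable (fun ω => ∫ t, (1 - Real.cos (t * Y n ω)) ∂ν) P :=
        hFint.integral_prod_right
      have hL : ∫ t, (∫ ω, (1 - Real.cos (t * Y n ω)) ∂P) ∂ν ≤ c n := by
        have hLe : ∀ t ∈ Set.Ioc (0:ℝ) 1, (∫ ω, (1 - Real.cos (t * Y n ω)) ∂P) ≤ c n := by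
          intro t ht
          rw [integral_sub (integrable_const 1) (hintcos _ (hYmeas n) t), integral_const,
            hcos n t]
          simp only [probReal_univ, one_smul]
          have e1 : |t| ^ α ≤ 1 :=
            Real.rpow_le_one (abs_nonneg t) (by rw [abs_of_pos ht.1]; exact ht.2) hα.le
          have e2 := Real.add_one_le_exp (-(c n * |t| ^ α))
          nlinarith [hc n, Real.rpow_nonneg (abs_nonneg t) α,
            mul_le_mul_of_nonneg_left e1 (hc n)]
        calc ∫ t, (∫ ω, (1 - Real.cos (t * Y n ω)) ∂P) ∂ν
            ≤ ∫ _t, c n ∂ν := by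
              apply integral_mono_ae hint1 (integrable_const _)
              exact (ae_restrict_iff' measurableSet_Ioc).2 (Eventually.of_forall hLe)
          _ = c n := by
              rw [integral_const, hν, measureReal_restrict_apply_univ]
              simp [Real.volume_real_Ioc]
      have hAmeas : MeasurableSet {ω | 2 ≤ |Y n ω|} :=
        measurableSet_le measurable_const ((hYmeas n).abs)
      have hlow : (1/2 : ℝ) * (P {ω | 2 ≤ |Y n ω|}).toReal
          ≤ ∫ ω, (∫ t, (1 - Real.cos (t * Y n ω)) ∂ν) ∂P := by
        have h1 : ∫ _ω in {ω | 2 ≤ |Y n ω|}, (1/2 : ℝ) ∂P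
            ≤ ∫ ω in {ω | 2 ≤ |Y n ω|}, (∫ t, (1 - Real.cos (t * Y n ω)) ∂ν) ∂P := by
          apply setIntegral_mono_on (integrableOn_const (measure_ne_top _ _))
            (hGint.integrableOn) hAmeas
          intro ω hω
          exact aux_tail hω
        have h2 : ∫ ω in {ω | 2 ≤ |Y n ω|}, (∫ t, (1 - Real.cos (t * Y n ω)) ∂ν) ∂P
            ≤ ∫ ω, (∫ t, (1 - Real.cos (t * Y n ω)) ∂ν) ∂P :=
          setIntegral_le_integral hGint (Eventually.of_forall fun ω => aux_tail_nonneg _)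
        have h3 : ∫ _ω in {ω | 2 ≤ |Y n ω|}, (1/2 : ℝ) ∂P
            = (P {ω | 2 ≤ |Y n ω|}).toReal * (1/2) := by
          rw [setIntegral_const, smul_eq_mul, measureReal_def]
        linarith
      rw [← hswap] at hlow
      have hPA : (P {ω | 2 ≤ |Y n ω|}).toReal ≤ 2 * c n := by linarith
      exact (ENNReal.le_ofReal_iff_toReal_le (measure_ne_top P _)
        (by linarith [hc n])).2 hPA
    have hBC : ∀ᵐ ω ∂P, ∀ᶠ n in atTop, ω ∉ {ω' | 2 ≤ |Y n ω'|} := by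
      apply ae_eventually_notMem
      have h1 : ∑' n, P {ω' | 2 ≤ |Y n ω'|} ≤ ∑' n, ENNReal.ofReal (2 * c n) :=
        ENNReal.tsum_le_tsum htail
      refine ne_top_of_le_ne_top ?_ h1
      rw [← ENNReal.ofReal_tsum_of_nonneg (fun n => by linarith [hc n]) (hsum.mul_left 2)]
      exact ENNReal.ofReal_ne_top
    -- summability of truncated squares
    set W : ℕ → Ω → ℝ := fun n ω => if |Y n ω| < 2 then (Y n ω)^2 else 0 with hW
    have hWmeas : ∀ n, Measurable (W n) := fun n =>
      Measurable.ite (measurableSet_lt ((hYmeas n).abs) measurable_const)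
        ((hYmeas n).pow_const 2) measurable_const
    have hWnn : ∀ n ω, 0 ≤ W n ω := by
      intro n ω
      rw [hW]
      dsimp only
      split
      · exact sq_nonneg _
      · exact le_refl 0
    have hWle : ∀ n ω, W n ω ≤ 5 * (1 - Real.cos (Y n ω)) := by
      intro n ω
      rw [hW]
      dsimp only
      split
      case isTrue h => exact aux_sq_le_cos h.le
      case isFalse h => linarith [Real.cos_le_one (Y n ω)]
    have hWint : ∀ n, Integrable (W n) P := by
      intro n
      apply hint _ (hWmeas n) 4
      intro ω
      rw [hW]
      dsimp only
      split
      case isTrue h =>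
        rw [abs_of_nonneg (sq_nonneg _), ← sq_abs]
        nlinarith [abs_nonneg (Y n ω)]
      case isFalse h => simp
    have hWsum : ∀ n, ∫ ω, W n ω ∂P ≤ 5 * c n := by
      intro n
      have hcos1 : ∫ ω, Real.cos (Y n ω) ∂P = Real.exp (-(c n)) := by
        have h := hcos n 1
        simpa [abs_one, Real.one_rpow, one_mul] using h
      have hcos1int : Integrable (fun ω => Real.cos (Y n ω)) P := by
        have h := hintcos _ (hYmeas n) 1
        simpa [one_mul] using h
      have h1 : ∫ ω, W n ω ∂P ≤ ∫ ω, 5 * (1 - Real.cos (Y n ω)) ∂P := by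
        apply integral_mono (hWint n)
        · exact ((integrable_const 1).sub hcos1int).const_mul 5
        · exact fun ω => hWle n ω
      have h2 : ∫ ω, 5 * (1 - Real.cos (Y n ω)) ∂P = 5 * (1 - Real.exp (-(c n))) := by
        rw [integral_const_mul, integral_sub (integrable_const 1) hcos1int, integral_const,
          hcos1]
        simp [measure_univ]
      have h3 := Real.add_one_le_exp (-(c n))
      rw [h2] at h1
      linarith
    have hWae : ∀ᵐ ω ∂P, Summable (fun n => W n ω) := by
      have h1 : ∫⁻ ω, ∑' n, ENNReal.ofReal (W n ω) ∂P < ⊤ := by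
        rw [lintegral_tsum (fun n => ((hWmeas n).ennreal_ofReal).aemeasurable)]
        have h2 : ∀ n, ∫⁻ ω, ENNReal.ofReal (W n ω) ∂P ≤ ENNReal.ofReal (5 * c n) := by
          intro n
          rw [← ofReal_integral_eq_lintegral_ofReal (hWint n)
            (Eventually.of_forall (hWnn n))]
          exact ENNReal.ofReal_le_ofReal (hWsum n)
        calc ∑' n, ∫⁻ ω, ENNReal.ofReal (W n ω) ∂P
            ≤ ∑' n, ENNReal.ofReal (5 * c n) := ENNReal.tsum_le_tsum h2
          _ < ⊤ := by
              rw [← ENNReal.ofReal_tsum_of_nonneg (fun n => by linarith [hc n])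
                (hsum.mul_left 5)]
              exact ENNReal.ofReal_lt_top
      filter_upwards [ae_lt_top (Measurable.ennreal_tsum
        (fun n => (hWmeas n).ennreal_ofReal)) h1.ne] with ω hω
      have h4 := ENNReal.summable_toReal hω.ne
      exact h4.congr (fun n => ENNReal.toReal_ofReal (hWnn n ω))
    -- assemble
    filter_upwards [hconvX, hBC, hWae] with ω h1 h2 h3
    obtain ⟨l, hl⟩ := h1
    have hXconv : Tendsto (fun N => ∑ i ∈ Finset.range N, X i ω) atTop (𝓝 l) := by
      have e : (fun n => f n ω) = fun n => (fun N => ∑ i ∈ Finset.range N, X i ω) (n + 1) :=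
        rfl
      rw [e] at hl
      exact (tendsto_add_atTop_iff_nat 1).1 hl
    have hDsum : Summable (fun n => Y n ω - X n ω) := by
      apply Summable.of_norm_bounded_eventually h3
      rw [Nat.cofinite_eq_atTop]
      filter_upwards [h2] with n hn
      have hYlt : |Y n ω| < 2 := by
        simpa [not_le] using hn
      have e : W n ω = (Y n ω) ^ 2 := by
        rw [hW]
        dsimp only
        rw [if_pos hYlt]
      rw [e, Real.norm_eq_abs]
      exact aux_sub_sin hYlt.le
    have hDconv : Tendsto (fun N => ∑ i ∈ Finset.range N, (Y i ω - X i ω)) atTop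
        (𝓝 (∑' k, (Y k ω - X k ω))) := hDsum.hasSum.tendsto_sum_nat
    refine ⟨l + ∑' k, (Y k ω - X k ω), ?_⟩
    have heq : (fun N => ∑ n ∈ Finset.range N, Y n ω)
        = fun N => (∑ i ∈ Finset.range N, X i ω) + ∑ i ∈ Finset.range N, (Y i ω - X i ω) := by
      funext N
      rw [← Finset.sum_add_distrib]
      apply Finset.sum_congr rfl
      intros
      ring
    rw [heq]
    exact hXconv.add hDconv
end

section
/- Let α ∈ (0,2) and let σ : ℕ → [0,∞) be a sequence of nonnegative reals. Then the following are equivalent: (i) for every real sequence (a_n) with Σ_{n} a_n² < ∞ one has Σ_n (|a_n| σ_n)^α < ∞; (ii) Σ_n σ_n^{2α/(2−α)} < ∞. -/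
open Real

private lemma stmt8_block {b : ℕ → ℝ} (hb : ∀ n, 0 ≤ b n) (h : ¬ Summable b)
    (m : ℕ) (C : ℝ) : ∃ n, m ≤ n ∧ C ≤ ∑ i ∈ Finset.Ico m n, b i := by
  have ht := (not_summable_iff_tendsto_nat_atTop_of_nonneg hb).mp h
  obtain ⟨n, h1, h2⟩ :=
    ((ht.eventually_ge_atTop (C + ∑ i ∈ Finset.range m, b i)).and
      (Filter.eventually_ge_atTop m)).exists
  refine ⟨n, h2, ?_⟩
  have hs := Finset.sum_Ico_eq_sub b h2
  linarith

theorem stmt_8 (α : ℝ) (hα : 0 < α) (hα2 : α < 2)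
    (σ : ℕ → ℝ) (hσ : ∀ n, 0 ≤ σ n) :
    (∀ a : ℕ → ℝ, Summable (fun n => a n ^ 2) →
        Summable (fun n => (|a n| * σ n) ^ α)) ↔
      Summable (fun n => σ n ^ (2 * α / (2 - α))) := by
  have h2α : (0:ℝ) < 2 - α := by linarith
  set β : ℝ := 2 * α / (2 - α) with hβdef
  have hβpos : 0 < β := by positivity
  constructor
  · -- hard direction
    intro H
    by_contra hns
    set b : ℕ → ℝ := fun n => σ n ^ β with hbdef
    have hbnn : ∀ n, 0 ≤ b n := fun n => rpow_nonneg (hσ n) _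
    have hEX : ∀ m C, ∃ n, m ≤ n ∧ C ≤ ∑ i ∈ Finset.Ico m n, b i :=
      stmt8_block hbnn hns
    choose g hg1 hg2 using hEX
    set M : ℕ := ⌈β⌉₊ with hMdef
    have hMβ : β ≤ (M:ℝ) := Nat.le_ceil β
    set N : ℕ → ℕ := fun k => Nat.rec 0 (fun k Nk => g Nk (((k:ℝ)+1)^M)) k with hNdef
    have hN0 : N 0 = 0 := rfl
    have hNsucc : ∀ k, N (k+1) = g (N k) (((k:ℝ)+1)^M) := fun k => rfl
    set T : ℕ → ℝ := fun k => ∑ i ∈ Finset.Ico (N k) (N (k+1)), b i with hTdef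
    have hNle : ∀ k, N k ≤ N (k+1) := by
      intro k; rw [hNsucc k]; exact hg1 _ _
    have hT : ∀ k : ℕ, ((k:ℝ)+1)^M ≤ T k := by
      intro k
      have := hg2 (N k) (((k:ℝ)+1)^M)
      rw [← hNsucc k] at this
      exact this
    have hck : ∀ k : ℕ, (1:ℝ) ≤ ((k:ℝ)+1)^M := by
      intro k
      calc (1:ℝ) = 1 ^ M := (one_pow M).symm
      _ ≤ ((k:ℝ)+1)^M := by
        apply pow_le_pow_left₀ (by norm_num)
        have : (0:ℝ) ≤ (k:ℝ) := Nat.cast_nonneg k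
        linarith
    have hTpos : ∀ k, 0 < T k := fun k =>
      lt_of_lt_of_le (by positivity) (hT k)
    have hNlt : ∀ k, N k < N (k+1) := by
      intro k
      rcases lt_or_eq_of_le (hNle k) with h | h
      · exact h
      · exfalso
        have hemp : Finset.Ico (N k) (N (k+1)) = ∅ := by
          rw [← h]; exact Finset.Ico_self _
        have : T k = 0 := by rw [hTdef]; simp only; rw [hemp]; simp
        linarith [hTpos k]
    have hNmono : StrictMono N := strictMono_nat_of_lt_succ hNlt
    have hNk : ∀ k, k ≤ N k := fun k => hNmono.le_apply
    have hEx : ∀ n, ∃ k, n < N (k+1) :=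
      fun n => ⟨n, lt_of_lt_of_le (Nat.lt_succ_self n) (hNk (n+1))⟩
    set idx : ℕ → ℕ := fun n => Nat.find (hEx n) with hidxdef
    have hidx : ∀ k n, N k ≤ n → n < N (k+1) → idx n = k := by
      intro k n h1 h2
      refine le_antisymm (Nat.find_le h2) ?_
      by_contra hlt
      push_neg at hlt
      have hspec : n < N (idx n + 1) := Nat.find_spec (hEx n)
      have hmon : N (idx n + 1) ≤ N k := hNmono.monotone (Nat.succ_le_of_lt hlt)
      exact absurd (lt_of_lt_of_le hspec (le_trans hmon h1)) (lt_irrefl n)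
    set a : ℕ → ℝ := fun n => Real.sqrt (b n / T (idx n)) / ((idx n : ℝ) + 1)
      with hadef
    have hann : ∀ n, 0 ≤ a n := by
      intro n; rw [hadef]; positivity
    have hval : ∀ k, ∀ n ∈ Finset.Ico (N k) (N (k+1)),
        a n = Real.sqrt (b n / T k) / ((k:ℝ)+1) := by
      intro k n hn
      rw [Finset.mem_Ico] at hn
      rw [hadef]; simp only; rw [hidx k n hn.1 hn.2]
    have hblock2 : ∀ k,
        ∑ i ∈ Finset.Ico (N k) (N (k+1)), a i ^ 2 = 1/((k:ℝ)+1)^2 := by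
      intro k
      have hTk := hTpos k
      have hk1 : (0:ℝ) < (k:ℝ)+1 := by positivity
      have hcongr : ∀ i ∈ Finset.Ico (N k) (N (k+1)),
          a i ^ 2 = b i * (1 / (T k * ((k:ℝ)+1)^2)) := by
        intro i hi
        rw [hval k i hi, div_pow, Real.sq_sqrt (div_nonneg (hbnn i) hTk.le),
          div_div, mul_one_div]
      rw [Finset.sum_congr rfl hcongr, ← Finset.sum_mul]
      have hsb : ∑ i ∈ Finset.Ico (N k) (N (k+1)), b i = T k := by rw [hTdef]
      rw [hsb]
      field_simp
    have hdecomp : ∀ (f : ℕ → ℝ) (K : ℕ),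
        ∑ i ∈ Finset.range (N K), f i
          = ∑ k ∈ Finset.range K, ∑ i ∈ Finset.Ico (N k) (N (k+1)), f i := by
      intro f K
      induction K with
      | zero => simp [hN0]
      | succ K ih =>
        calc ∑ i ∈ Finset.range (N (K+1)), f i
            = (∑ i ∈ Finset.Ico 0 (N K), f i)
                + ∑ i ∈ Finset.Ico (N K) (N (K+1)), f i := by
              rw [Finset.range_eq_Ico]
              exact (Finset.sum_Ico_consecutive f (Nat.zero_le (N K)) (hNle K)).symm
          _ = (∑ i ∈ Finset.range (N K), f i)
                + ∑ i ∈ Finset.Ico (N K) (N (K+1)), f i := by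
              rw [Finset.range_eq_Ico]
          _ = ∑ k ∈ Finset.range (K+1), ∑ i ∈ Finset.Ico (N k) (N (k+1)), f i := by
              rw [Finset.sum_range_succ, ih]
    have hsq : Summable (fun k : ℕ => 1 / ((k:ℝ)+1)^2) := by
      have h1 : Summable (fun n : ℕ => 1 / (n:ℝ)^2) :=
        Real.summable_one_div_nat_pow.mpr one_lt_two
      have h2 := (summable_nat_add_iff 1).mpr h1
      convert h2 using 2 with n
      · rfl
      · push_cast
        ring_nf
    have hsum2 : Summable (fun n => a n ^ 2) := by
      apply summable_of_sum_range_le (c := ∑' k : ℕ, 1/((k:ℝ)+1)^2)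
        (fun n => sq_nonneg _)
      intro n
      calc ∑ i ∈ Finset.range n, a i ^ 2
          ≤ ∑ i ∈ Finset.range (N n), a i ^ 2 :=
            Finset.sum_le_sum_of_subset_of_nonneg
              (Finset.range_subset_range.mpr (hNk n)) (fun i _ _ => sq_nonneg _)
        _ = ∑ k ∈ Finset.range n, 1/((k:ℝ)+1)^2 := by
            rw [hdecomp]
            exact Finset.sum_congr rfl fun k _ => hblock2 k
        _ ≤ ∑' k : ℕ, 1/((k:ℝ)+1)^2 :=
            Summable.sum_le_tsum _ (fun i _ => by positivity) hsq
    have hS := H a hsum2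
    have hexp : β * (α/2) + α = β := by
      rw [hβdef]
      field_simp
      ring
    have hblockLow : ∀ k,
        (1:ℝ) ≤ ∑ i ∈ Finset.Ico (N k) (N (k+1)), (|a i| * σ i) ^ α := by
      intro k
      have hTk := hTpos k
      have hk1 : (0:ℝ) < (k:ℝ)+1 := by positivity
      have hterm : ∀ i ∈ Finset.Ico (N k) (N (k+1)),
          (|a i| * σ i) ^ α = b i * (1 / (T k ^ (α/2) * ((k:ℝ)+1) ^ α)) := by
        intro i hi
        rw [abs_of_nonneg (hann i), hval k i hi]
        have hbi := hbnn i
        calc (Real.sqrt (b i / T k) / ((k:ℝ)+1) * σ i) ^ α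
            = (Real.sqrt (b i / T k)) ^ α / ((k:ℝ)+1) ^ α * σ i ^ α := by
              rw [Real.mul_rpow (by positivity) (hσ i),
                Real.div_rpow (Real.sqrt_nonneg _) hk1.le]
          _ = (b i / T k) ^ (α/2) / ((k:ℝ)+1) ^ α * σ i ^ α := by
              rw [Real.sqrt_eq_rpow, ← Real.rpow_mul (by positivity),
                show (1/2) * α = α/2 by ring]
          _ = (b i ^ (α/2) / T k ^ (α/2)) / ((k:ℝ)+1) ^ α * σ i ^ α := by
              rw [Real.div_rpow (hbnn i) hTk.le]
          _ = (b i ^ (α/2) * σ i ^ α) * (1 / (T k ^ (α/2) * ((k:ℝ)+1) ^ α)) := by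
              ring
          _ = b i * (1 / (T k ^ (α/2) * ((k:ℝ)+1) ^ α)) := by
              congr 1
              have hbi' : b i = σ i ^ β := by rw [hbdef]
              rw [hbi', ← Real.rpow_mul (hσ i),
                ← Real.rpow_add' (hσ i) (by rw [hexp]; exact hβpos.ne'), hexp]
      rw [Finset.sum_congr rfl hterm, ← Finset.sum_mul]
      have hsb : ∑ i ∈ Finset.Ico (N k) (N (k+1)), b i = T k := by rw [hTdef]
      rw [hsb]
      have hexpM : α ≤ (M:ℝ) * (1 - α/2) := by
        have h1 : 2 * α / (2 - α) ≤ (M:ℝ) := by rw [hβdef] at hMβ; exact hMβ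
        rw [div_le_iff₀ h2α] at h1
        nlinarith
      have hc1 : (1:ℝ) ≤ (k:ℝ)+1 := by
        have : (0:ℝ) ≤ (k:ℝ) := Nat.cast_nonneg k
        linarith
      have hstep : ((k:ℝ)+1) ^ α ≤ T k ^ (1 - α/2) := by
        calc ((k:ℝ)+1) ^ α ≤ ((k:ℝ)+1) ^ ((M:ℝ) * (1 - α/2)) :=
              Real.rpow_le_rpow_of_exponent_le hc1 hexpM
          _ = (((k:ℝ)+1) ^ (M:ℝ)) ^ (1 - α/2) := Real.rpow_mul hk1.le _ _
          _ = (((k:ℝ)+1) ^ M) ^ (1 - α/2) := by rw [Real.rpow_natCast]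
          _ ≤ T k ^ (1 - α/2) :=
              Real.rpow_le_rpow (by positivity) (hT k) (by linarith)
      have hmul : T k ^ (α/2) * ((k:ℝ)+1) ^ α ≤ T k := by
        calc T k ^ (α/2) * ((k:ℝ)+1) ^ α
            ≤ T k ^ (α/2) * T k ^ (1 - α/2) :=
              mul_le_mul_of_nonneg_left hstep (Real.rpow_nonneg hTk.le _)
          _ = T k := by
              rw [← Real.rpow_add hTk, show α/2 + (1 - α/2) = 1 by ring,
                Real.rpow_one]
      have hden : 0 < T k ^ (α/2) * ((k:ℝ)+1) ^ α := by positivity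
      rw [mul_one_div, le_div_iff₀ hden, one_mul]
      exact hmul
    have hnonneg : ∀ n, 0 ≤ (|a n| * σ n) ^ α :=
      fun n => Real.rpow_nonneg (mul_nonneg (abs_nonneg _) (hσ n)) _
    obtain ⟨K, hK⟩ := exists_nat_gt (∑' n, (|a n| * σ n) ^ α)
    have hle : (K:ℝ) ≤ ∑ i ∈ Finset.range (N K), (|a i| * σ i) ^ α := by
      rw [hdecomp]
      calc (K:ℝ) = ∑ _k ∈ Finset.range K, (1:ℝ) := by simp
        _ ≤ _ := Finset.sum_le_sum fun k _ => hblockLow k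
    have hts := Summable.sum_le_tsum (Finset.range (N K)) (fun i _ => hnonneg i) hS
    linarith
  · -- easy direction
    intro h a ha
    have hpq : (2/α).HolderConjugate (2/(2-α)) := by
      rw [Real.holderConjugate_iff]
      constructor
      · rw [lt_div_iff₀ hα]; linarith
      · field_simp
        ring
    have key : ∀ n, (|a n| * σ n) ^ α ≤ α/2 * a n ^ 2 + (2-α)/2 * σ n ^ β := by
      intro n
      have h1 : (|a n| * σ n) ^ α = |a n| ^ α * σ n ^ α :=
        Real.mul_rpow (abs_nonneg _) (hσ n)
      have h2 := Real.young_inequality_of_nonneg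
        (Real.rpow_nonneg (abs_nonneg (a n)) α) (Real.rpow_nonneg (hσ n) α) hpq
      have e1 : (|a n| ^ α) ^ (2/α) = a n ^ 2 := by
        rw [← Real.rpow_mul (abs_nonneg _),
          show α * (2/α) = ((2:ℕ):ℝ) by push_cast; field_simp,
          Real.rpow_natCast, sq_abs]
      have e2 : (σ n ^ α) ^ (2/(2-α)) = σ n ^ β := by
        rw [← Real.rpow_mul (hσ n), hβdef]
        congr 1
        field_simp
      rw [e1, e2] at h2
      have h3 : a n ^ 2 / (2/α) = α/2 * a n ^ 2 := by
        field_simp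
      have h4 : σ n ^ β / (2/(2-α)) = (2-α)/2 * σ n ^ β := by
        field_simp
      rw [h3, h4] at h2
      linarith [h1 ▸ h2]
    have hmaj : Summable (fun n => α/2 * a n ^ 2 + (2-α)/2 * σ n ^ β) :=
      (ha.mul_left _).add (h.mul_left _)
    exact Summable.of_nonneg_of_le
      (fun n => Real.rpow_nonneg (mul_nonneg (abs_nonneg _) (hσ n)) _)
      key hmaj
end
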